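/- For any sector F with a baseline, and any two points p, q in F, there exists an orthogonal polyline from p to q lying entirely inside F with at most 2 bends. -/
import Mathlib


/-- A point in the plane. -/
abbrev Pt := ℝ × ℝ

/-- Two points span an axis-parallel (horizontal or vertical) segment. -/
def AxisParallel (a b : Pt) : Prop := a.1 = b.1 ∨ a.2 = b.2

/-- An orthogonal polyline inside the region `f`: a list of at least two points whose
consecutive segments are axis-parallel and contained in `f`. -/
def IsOrthoPolyline (f : Set Pt) (l : List Pt) : Prop :=
  2 ≤ l.length ∧ l.Chain' (fun a b => AxisParallel a b ∧ segment ℝ a b ⊆ f)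

/-- `PolyFrom f p q l`: `l` is an orthogonal polyline inside `f` from `p` to `q`. -/
def PolyFrom (f : Set Pt) (p q : Pt) (l : List Pt) : Prop :=
  IsOrthoPolyline f l ∧ l.head? = some p ∧ l.getLast? = some q

/-- The four axis directions. -/
inductive Dir | up | down | left | right
deriving DecidableEq

/-- The unit vector of a direction. -/
def Dir.vec : Dir → Pt
  | .up => (0, 1)
  | .down => (0, -1)
  | .left => (-1, 0)
  | .right => (1, 0)

/-- The polyline `l` arrives at its final point from direction `d`:
its last segment travels in direction `d`. -/
def ArrivesFrom (d : Dir) (l : List Pt) : Prop :=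
  ∃ x a : Pt, [x, a] <:+ l ∧ ∃ t : ℝ, 0 < t ∧ a - x = t • d.vec

/-- The bend distance from a point `p` inside a face `f` to a port candidate `(a, d)`:
the minimum number of bends of an orthogonal polyline inside `f` from `p` to `a` arriving
at `a` from direction `d`.  (A polyline on `m` points has `m - 2` bends; collinear
consecutive segments can always be merged, so the minimum is unaffected.) -/
noncomputable def bdist (f : Set Pt) (p a : Pt) (d : Dir) : ℕ :=
  sInf {b | ∃ l, PolyFrom f p a l ∧ ArrivesFrom d l ∧ l.length - 2 = b}

/-- `F` is a histogram over the horizontal baseline `δ` from `(x₁, y₀)` to `(x₂, y₀)`: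
the baseline is a segment on (the boundary of) `F`, and every point of `F` is reachable by a
vertical ray starting at the baseline and orthogonal to it. -/
def IsHistogram (F : Set Pt) (y₀ x₁ x₂ : ℝ) : Prop :=
  segment ℝ ((x₁, y₀) : Pt) ((x₂, y₀) : Pt) ⊆ F ∧
  ∀ p ∈ F, ((p.1, y₀) : Pt) ∈ segment ℝ ((x₁, y₀) : Pt) ((x₂, y₀) : Pt) ∧
    segment ℝ ((p.1, y₀) : Pt) p ⊆ F

/-- For any sector `F` admitting a baseline (i.e. `F` is a histogram over a baseline `δ`),
and any two points `p, q ∈ F`, there exists an orthogonal polyline from `p` to `q` lying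
entirely inside `F` with at most 2 bends. -/
theorem stmt_2 (F : Set Pt) (y₀ x₁ x₂ : ℝ) (hhist : IsHistogram F y₀ x₁ x₂)
    (p q : Pt) (hp : p ∈ F) (hq : q ∈ F) :
    ∃ l, PolyFrom F p q l ∧ l.length - 2 ≤ 2 := by
  obtain ⟨hbase, hray⟩ := hhist
  obtain ⟨hpδ, hpseg⟩ := hray p hp
  obtain ⟨hqδ, hqseg⟩ := hray q hq
  refine ⟨[p, (p.1, y₀), (q.1, y₀), q], ⟨⟨by simp, ?_⟩, rfl, rfl⟩, by simp⟩
  refine List.isChain_cons_cons.2 ⟨⟨Or.inl rfl, ?_⟩, List.isChain_cons_cons.2 ⟨⟨Or.inr rfl, ?_⟩,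
    List.isChain_cons_cons.2 ⟨⟨Or.inl rfl, ?_⟩, List.isChain_singleton q⟩⟩⟩
  · rw [segment_symm]; exact hpseg
  · exact Set.Subset.trans ((convex_segment _ _).segment_subset hpδ hqδ) hbase
  · exact hqseg
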